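/- Let f : ℂ → ℂ be complex differentiable at z with f(z) ≠ 0, and let g be the function w ↦ (f(w))⁻¹. Then V_g(z) = −V_f(z); that is, the desingularized Newton field of 1/f is the negative of the desingularized Newton field of f. -/

import Mathlib

open Complex

/-- The desingularized Newton field of `f`. -/
noncomputable def desingNewton (f : ℂ → ℂ) (z : ℂ) : ℂ :=
  -(((1 + ‖f z‖ ^ 4 : ℝ) : ℂ))⁻¹ * (starRingEnd ℂ) (deriv f z) * f z

/-- The desingularized Newton field of `1/f` is the negative of that of `f`. -/
theorem desingNewton_duality
    (f : ℂ → ℂ) (z : ℂ) (hf : DifferentiableAt ℂ f z) (hfz : f z ≠ 0) :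
    desingNewton (fun w => (f w)⁻¹) z = -desingNewton f z := by
  have hd : deriv (fun w => (f w)⁻¹) z = -deriv f z / f z ^ 2 :=
    deriv_inv'' hf hfz
  have habs : ‖f z‖ ≠ 0 := norm_ne_zero_iff.mpr hfz
  have hca : ((‖f z‖ : ℂ)) ≠ 0 := by exact_mod_cast habs
  have h1 : (1 : ℝ) + ‖f z‖ ^ 4 ≠ 0 := by positivity
  have hsq : ((‖f z‖ : ℂ)) ^ 2 = f z * (starRingEnd ℂ) (f z) := by
    rw [Complex.mul_conj, ← Complex.ofReal_pow, Complex.sq_norm]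
  simp only [desingNewton, hd, map_inv₀, norm_inv, map_div₀, map_neg, map_pow, Complex.ofReal_add, Complex.ofReal_one, Complex.ofReal_pow, Complex.ofReal_inv]
  have hc : (starRingEnd ℂ) (f z) ≠ 0 := by simpa using hfz
  have h1c : (1 : ℂ) + ((‖f z‖ : ℂ)) ^ 4 ≠ 0 := by
    exact_mod_cast h1
  have ha4 : ((‖f z‖ : ℂ)) ^ 4 = (f z * (starRingEnd ℂ) (f z)) ^ 2 := by
    rw [← hsq]; ring
  field_simp
  rw [div_eq_iff (by
    intro h
    apply h1c
    linear_combination h)]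
  linear_combination ((starRingEnd ℂ) (deriv f z) * (1 + ((‖f z‖ : ℂ)) ^ 4)) * ha4
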